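/- Let R > 0 and let Π be a measurable real-valued function on D = {(x,y) ∈ ℝ² : 0 ≤ x ≤ y}. Assume there exist ε > 0 and a constant c > 0 such that ∫_0^R |Π(x,y)| dx ≤ c / y^{1+ε} for all y ≥ R. Then ∫∫_{{(x,y) : 0 ≤ x < R ≤ y}} |φ^{(R,T)}(x) − φ^{(R,T)}(y)|² · |Π(x,y)| dx dy → 0 as T → ∞. -/

import Mathlib

set_option maxHeartbeats 1000000

open MeasureTheory Filter

/-- The cutoff function `φ^{(R,T)}`: equal to `1` on `(-∞, R]`, to
`1 - log(x-R+1)/log(T-R+1)` on `[R, T]`, and to `0` on `[T, ∞)`. -/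
noncomputable def phi (R T x : ℝ) : ℝ :=
  if x ≤ R then 1
  else if x ≤ T then 1 - Real.log (x - R + 1) / Real.log (T - R + 1)
  else 0

lemma phi_of_le {R T x : ℝ} (h : x ≤ R) : phi R T x = 1 := if_pos h

lemma phi_sub_nonneg {R T y : ℝ} (hRT : R < T) (hy : R ≤ y) : 0 ≤ 1 - phi R T y := by
  have hL : 0 < Real.log (T - R + 1) := Real.log_pos (by linarith)
  unfold phi
  split_ifs with h1 h2
  · norm_num
  · have h0 : 0 ≤ Real.log (y - R + 1) := Real.log_nonneg (by linarith)
    have := div_nonneg h0 hL.le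
    linarith
  · norm_num

lemma phi_sub_le {R T y : ℝ} (hRT : R < T) (hy : R ≤ y) :
    1 - phi R T y ≤ Real.log (y - R + 1) / Real.log (T - R + 1) := by
  have hL : 0 < Real.log (T - R + 1) := Real.log_pos (by linarith)
  unfold phi
  split_ifs with h1 h2
  · have : y = R := le_antisymm h1 hy
    simp [this]
  · linarith
  · push_neg at h1 h2
    have hlog : Real.log (T - R + 1) ≤ Real.log (y - R + 1) :=
      Real.log_le_log (by linarith) (by linarith)
    have h := (one_le_div hL).2 hlog
    linarith

lemma phi_sub_pos {R T y : ℝ} (hRT : R < T) (hy : R < y) : 0 < 1 - phi R T y := by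
  have hL : 0 < Real.log (T - R + 1) := Real.log_pos (by linarith)
  unfold phi
  split_ifs with h1 h2
  · linarith
  · have h0 : 0 < Real.log (y - R + 1) := Real.log_pos (by linarith)
    have := div_pos h0 hL
    linarith
  · norm_num

lemma log_sq_bound {R ε c y : ℝ} (hR : 0 < R) (hε : 0 < ε) (hc : 0 ≤ c) (hy : R ≤ y) :
    Real.log (y - R + 1) ^ 2 * (c / y ^ (1 + ε)) ≤
      c * ((4 / ε) ^ 2 * (1 + 1 / R) ^ (ε / 2)) * y ^ (-(1 + ε / 2)) := by
  have hy0 : 0 < y := hR.trans_le hy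
  have h1 : (1:ℝ) ≤ y - R + 1 := by linarith
  have h10 : (0:ℝ) < y - R + 1 := by linarith
  have hlog : Real.log (y - R + 1) ≤ (y - R + 1) ^ (ε / 4) / (ε / 4) :=
    Real.log_le_rpow_div h10.le (by positivity)
  have hsq : Real.log (y - R + 1) ^ 2 ≤ ((y - R + 1) ^ (ε / 4) / (ε / 4)) ^ 2 :=
    pow_le_pow_left₀ (Real.log_nonneg h1) hlog 2
  have hrw : ((y - R + 1) ^ (ε / 4)) ^ 2 = (y - R + 1) ^ (ε / 2) := by
    rw [← Real.rpow_natCast ((y - R + 1) ^ (ε / 4)) 2, ← Real.rpow_mul h10.le]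
    norm_num
    ring_nf
  have hsq2 : Real.log (y - R + 1) ^ 2 ≤ (4 / ε) ^ 2 * (y - R + 1) ^ (ε / 2) := by
    calc Real.log (y - R + 1) ^ 2 ≤ ((y - R + 1) ^ (ε / 4) / (ε / 4)) ^ 2 := hsq
    _ = (4 / ε) ^ 2 * ((y - R + 1) ^ (ε / 4)) ^ 2 := by field_simp
    _ = (4 / ε) ^ 2 * (y - R + 1) ^ (ε / 2) := by rw [hrw]
  have hyR : y - R + 1 ≤ (1 + 1 / R) * y := by
    have h2 : (1:ℝ) ≤ y / R := (one_le_div hR).2 hy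
    have h3 : (1 + 1 / R) * y = y + y / R := by ring
    linarith
  have hrp : (y - R + 1) ^ (ε / 2) ≤ (1 + 1 / R) ^ (ε / 2) * y ^ (ε / 2) := by
    calc (y - R + 1) ^ (ε / 2) ≤ ((1 + 1 / R) * y) ^ (ε / 2) :=
          Real.rpow_le_rpow h10.le hyR (by positivity)
    _ = (1 + 1 / R) ^ (ε / 2) * y ^ (ε / 2) := Real.mul_rpow (by positivity) hy0.le
  have hdiv : c / y ^ (1 + ε) = c * y ^ (-(1 + ε)) := by
    rw [Real.rpow_neg hy0.le]; ring
  have hmul : y ^ (ε / 2) * y ^ (-(1 + ε)) = y ^ (-(1 + ε / 2)) := by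
    rw [← Real.rpow_add hy0]; norm_num; ring_nf
  have hnn : (0:ℝ) ≤ c / y ^ (1 + ε) := by positivity
  calc Real.log (y - R + 1) ^ 2 * (c / y ^ (1 + ε))
      ≤ ((4 / ε) ^ 2 * ((1 + 1 / R) ^ (ε / 2) * y ^ (ε / 2))) * (c / y ^ (1 + ε)) := by
        apply mul_le_mul_of_nonneg_right _ hnn
        exact hsq2.trans (mul_le_mul_of_nonneg_left hrp (by positivity))
    _ = c * ((4 / ε) ^ 2 * (1 + 1 / R) ^ (ε / 2)) * (y ^ (ε / 2) * y ^ (-(1 + ε))) := by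
        rw [hdiv]; ring
    _ = c * ((4 / ε) ^ 2 * (1 + 1 / R) ^ (ε / 2)) * y ^ (-(1 + ε / 2)) := by rw [hmul]

lemma M_integrable {R ε : ℝ} (c : ℝ) (hR : 0 < R) (hε : 0 < ε) :
    IntegrableOn (fun y : ℝ => c * ((4 / ε) ^ 2 * (1 + 1 / R) ^ (ε / 2)) * y ^ (-(1 + ε / 2)))
      (Set.Ici R) := by
  have h := (integrableOn_Ioi_rpow_of_lt (by linarith : -(1 + ε / 2) < -1) hR).const_mul
      (c * ((4 / ε) ^ 2 * (1 + 1 / R) ^ (ε / 2)))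
  have heq : (volume : Measure ℝ).restrict (Set.Ici R) = volume.restrict (Set.Ioi R) :=
    (Measure.restrict_congr_set Ioi_ae_eq_Ici).symm
  unfold IntegrableOn at *
  rw [heq]
  exact h

theorem stmt_1 (R : ℝ) (hR : 0 < R) (Pi : ℝ → ℝ → ℝ)
    (hmeas : Measurable fun p : ℝ × ℝ => Pi p.1 p.2)
    (ε c : ℝ) (hε : 0 < ε) (hc : 0 < c)
    (hbound : ∀ y : ℝ, R ≤ y →
      (∫ x in (0:ℝ)..R, |Pi x y|) ≤ c / y ^ (1 + ε)) :
    Tendsto (fun T : ℝ =>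
        ∫ p in {p : ℝ × ℝ | 0 ≤ p.1 ∧ p.1 < R ∧ R ≤ p.2},
          |phi R T p.1 - phi R T p.2| ^ 2 * |Pi p.1 p.2|)
      atTop (nhds 0) := by
  have hSeq : {p : ℝ × ℝ | 0 ≤ p.1 ∧ p.1 < R ∧ R ≤ p.2} = Set.Ico 0 R ×ˢ Set.Ici R := by
    ext p; simp [Set.mem_prod, Set.mem_Ico, Set.mem_Ici, and_assoc]
  set μ : Measure ℝ := volume.restrict (Set.Ico 0 R) with hμ
  set ν : Measure ℝ := volume.restrict (Set.Ici R) with hν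
  have hprodeq : μ.prod ν = (volume : Measure (ℝ × ℝ)).restrict (Set.Ico 0 R ×ˢ Set.Ici R) := by
    rw [hμ, hν, Measure.prod_restrict, ← Measure.volume_eq_prod]
  have hIeq : (fun T : ℝ =>
        ∫ p in {p : ℝ × ℝ | 0 ≤ p.1 ∧ p.1 < R ∧ R ≤ p.2},
          |phi R T p.1 - phi R T p.2| ^ 2 * |Pi p.1 p.2|) =
      fun T : ℝ => ∫ p, |phi R T p.1 - phi R T p.2| ^ 2 * |Pi p.1 p.2| ∂(μ.prod ν) := by
    funext T
    rw [hSeq, ← hprodeq]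
  rw [hIeq]
  have hPimeas_slice : ∀ y : ℝ, Measurable fun x => Pi x y := fun y =>
    hmeas.comp (measurable_id.prodMk measurable_const)
  have hIbound : ∀ y : ℝ, R ≤ y → (∫ x, |Pi x y| ∂μ) ≤ c / y ^ (1 + ε) := by
    intro y hy
    have h1 : (∫ x, |Pi x y| ∂μ) = ∫ x in Set.Ioc 0 R, |Pi x y| :=
      setIntegral_congr_set Ico_ae_eq_Ioc
    rw [h1, ← intervalIntegral.integral_of_le hR.le]
    exact hbound y hy
  by_cases hbad : volume ({y : ℝ | ¬ Integrable (fun x => Pi x y) μ} ∩ Set.Ioi R) = 0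
  · -- main case: dominated by G / (log (T-R+1))^2
    set G : ℝ × ℝ → ℝ := fun p => Real.log (p.2 - R + 1) ^ 2 * |Pi p.1 p.2| with hG
    have hGmeas : Measurable G := by
      apply Measurable.mul _ hmeas.abs
      exact (Real.measurable_log.comp ((measurable_snd.sub measurable_const).add
        measurable_const)).pow_const 2
    have hGsm : StronglyMeasurable G := hGmeas.stronglyMeasurable
    have hGslice : ∀ᵐ y ∂ν, Integrable (fun x => G (x, y)) μ := by
      have h0 : ∀ᵐ y : ℝ, y ∉ {y : ℝ | ¬ Integrable (fun x => Pi x y) μ} ∩ Set.Ioi R := by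
        rw [ae_iff]; simpa only [not_not, Set.setOf_mem_eq] using hbad
      filter_upwards [ae_restrict_of_ae h0, ae_restrict_mem measurableSet_Ici] with y hy1 hy2
      rcases eq_or_lt_of_le (Set.mem_Ici.mp hy2) with h | h
      · have hz : Real.log (y - R + 1) = 0 := by rw [← h]; norm_num
        have hzz : (fun x => G (x, y)) = fun _ => (0:ℝ) := by
          funext x
          simp only [hG]
          rw [hz]
          ring
        rw [hzz]
        exact integrable_const 0
      · have hyb : Integrable (fun x => Pi x y) μ := by
          by_contra hcon
          exact hy1 ⟨hcon, h⟩
        have hint2 : Integrable (fun x => Real.log (y - R + 1) ^ 2 * |Pi x y|) μ :=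
          (hyb.abs).const_mul _
        simpa only [hG] using hint2
    have hGsecond : Integrable (fun y => ∫ x, ‖G (x, y)‖ ∂μ) ν := by
      have hnorm : ∀ y : ℝ, (∫ x, ‖G (x, y)‖ ∂μ) =
          Real.log (y - R + 1) ^ 2 * ∫ x, |Pi x y| ∂μ := by
        intro y
        have h1 : (fun x => ‖G (x, y)‖) = fun x => Real.log (y - R + 1) ^ 2 * |Pi x y| := by
          funext x
          rw [Real.norm_eq_abs]
          exact abs_of_nonneg (by positivity)
        rw [h1, integral_const_mul]
      apply Integrable.mono (M_integrable c hR hε)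
      · exact (hGsm.norm.integral_prod_left').aestronglyMeasurable
      · filter_upwards [ae_restrict_mem measurableSet_Ici] with y hy
        have hy0 : (0:ℝ) < y := hR.trans_le hy
        rw [hnorm y]
        have hInn : 0 ≤ ∫ x, |Pi x y| ∂μ := integral_nonneg fun x => abs_nonneg _
        rw [Real.norm_eq_abs, Real.norm_eq_abs, abs_of_nonneg (by positivity),
          abs_of_nonneg (by positivity)]
        calc Real.log (y - R + 1) ^ 2 * ∫ x, |Pi x y| ∂μ
            ≤ Real.log (y - R + 1) ^ 2 * (c / y ^ (1 + ε)) :=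
              mul_le_mul_of_nonneg_left (hIbound y hy) (by positivity)
          _ ≤ c * ((4 / ε) ^ 2 * (1 + 1 / R) ^ (ε / 2)) * y ^ (-(1 + ε / 2)) :=
              log_sq_bound hR hε hc.le hy
    have hGint : Integrable G (μ.prod ν) :=
      (integrable_prod_iff' hGsm.aestronglyMeasurable).2 ⟨hGslice, hGsecond⟩
    set C : ℝ := ∫ p, G p ∂(μ.prod ν) with hC
    have key : ∀ T : ℝ, R < T →
        (∫ p, |phi R T p.1 - phi R T p.2| ^ 2 * |Pi p.1 p.2| ∂(μ.prod ν)) ≤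
          (Real.log (T - R + 1))⁻¹ ^ 2 * C := by
      intro T hT
      have hL : 0 < Real.log (T - R + 1) := Real.log_pos (by linarith)
      have hb : ∀ᵐ p ∂(μ.prod ν), |phi R T p.1 - phi R T p.2| ^ 2 * |Pi p.1 p.2| ≤
          (Real.log (T - R + 1))⁻¹ ^ 2 * G p := by
        rw [hprodeq]
        filter_upwards [ae_restrict_mem (measurableSet_Ico.prod measurableSet_Ici)] with p hp
        obtain ⟨hp1, hp2⟩ := hp
        have h1 : phi R T p.1 = 1 := phi_of_le (le_of_lt hp1.2)
        have hd0 := phi_sub_nonneg hT hp2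
        have hdle := phi_sub_le hT hp2
        have habs : |phi R T p.1 - phi R T p.2| = 1 - phi R T p.2 := by
          rw [h1]; exact abs_of_nonneg hd0
        rw [habs]
        have hsq : (1 - phi R T p.2) ^ 2 ≤
            (Real.log (p.2 - R + 1) / Real.log (T - R + 1)) ^ 2 :=
          pow_le_pow_left₀ hd0 hdle 2
        calc (1 - phi R T p.2) ^ 2 * |Pi p.1 p.2|
            ≤ (Real.log (p.2 - R + 1) / Real.log (T - R + 1)) ^ 2 * |Pi p.1 p.2| :=
              mul_le_mul_of_nonneg_right hsq (abs_nonneg _)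
          _ = (Real.log (T - R + 1))⁻¹ ^ 2 * G p := by
              simp only [hG]
              rw [div_eq_mul_inv, mul_pow]
              ring
      have hnn : ∀ᵐ p ∂(μ.prod ν),
          0 ≤ |phi R T p.1 - phi R T p.2| ^ 2 * |Pi p.1 p.2| :=
        Eventually.of_forall fun p => by positivity
      have h := integral_mono_of_nonneg hnn (hGint.const_mul ((Real.log (T - R + 1))⁻¹ ^ 2)) hb
      rwa [integral_const_mul] at h
    have hnonneg : ∀ T : ℝ,
        0 ≤ ∫ p, |phi R T p.1 - phi R T p.2| ^ 2 * |Pi p.1 p.2| ∂(μ.prod ν) := fun T =>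
      integral_nonneg fun p => by positivity
    have hLtop : Tendsto (fun T : ℝ => Real.log (T - R + 1)) atTop atTop := by
      apply Real.tendsto_log_atTop.comp
      have heq : (fun T : ℝ => T - R + 1) = fun T : ℝ => T + (1 - R) := by funext T; ring
      rw [heq]
      exact tendsto_atTop_add_const_right _ _ tendsto_id
    have hz : Tendsto (fun T : ℝ => (Real.log (T - R + 1))⁻¹ ^ 2 * C) atTop (nhds 0) := by
      have h := ((tendsto_inv_atTop_zero.comp hLtop).pow 2).mul_const C
      simpa using h
    refine tendsto_of_tendsto_of_tendsto_of_le_of_le' tendsto_const_nhds hz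
      (Eventually.of_forall hnonneg) ?_
    exact (eventually_gt_atTop R).mono key
  · -- degenerate case: the integrand is not integrable, all integrals vanish
    refine Tendsto.congr' ?_ (tendsto_const_nhds (α := ℝ) (x := (0:ℝ)) (f := atTop))
    filter_upwards [eventually_gt_atTop R] with T hT
    have hni : ¬ Integrable (fun p : ℝ × ℝ =>
        |phi R T p.1 - phi R T p.2| ^ 2 * |Pi p.1 p.2|) (μ.prod ν) := by
      intro h
      have hsl := h.prod_left_ae
      have hsub : {y : ℝ | ¬ Integrable (fun x => Pi x y) μ} ∩ Set.Ioi R ⊆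
          {y : ℝ | ¬ Integrable (fun x : ℝ =>
            |phi R T x - phi R T y| ^ 2 * |Pi x y|) μ} := by
        rintro y ⟨hyb, hyR⟩ hyint
        have hw : 0 < 1 - phi R T y := phi_sub_pos hT hyR
        have hcongr : (fun x : ℝ => |phi R T x - phi R T y| ^ 2 * |Pi x y|) =ᵐ[μ]
            fun x => (1 - phi R T y) ^ 2 * |Pi x y| := by
          filter_upwards [ae_restrict_mem measurableSet_Ico] with x hx
          rw [phi_of_le (le_of_lt hx.2), sq_abs]
        have h2 : Integrable (fun x => (1 - phi R T y) ^ 2 * |Pi x y|) μ :=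
          hyint.congr hcongr
        have h3 : Integrable (fun x => |Pi x y|) μ :=
          (integrable_const_mul_iff ((pow_ne_zero 2 hw.ne').isUnit) _).mp h2
        have h4 : Integrable (fun x => Pi x y) μ := by
          rw [← integrable_norm_iff ((hPimeas_slice y).aestronglyMeasurable)]
          simpa [Real.norm_eq_abs] using h3
        exact hyb h4
      rw [ae_iff] at hsl
      have h0 : ν ({y : ℝ | ¬ Integrable (fun x => Pi x y) μ} ∩ Set.Ioi R) = 0 := by
        apply measure_mono_null _ hsl
        intro y hy
        simpa using hsub hy
      rw [hν, Measure.restrict_apply' measurableSet_Ici] at h0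
      have hss : {y : ℝ | ¬ Integrable (fun x => Pi x y) μ} ∩ Set.Ioi R ∩ Set.Ici R
          = {y : ℝ | ¬ Integrable (fun x => Pi x y) μ} ∩ Set.Ioi R :=
        Set.inter_eq_self_of_subset_left fun y hy => Set.mem_Ici.mpr (le_of_lt hy.2)
      rw [hss] at h0
      exact hbad h0
    exact (integral_undef hni).symm
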